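/- Assume κ < −1 and set φ₂ := (−1−κ)^{−1/2}·(φ∘h) and φ₃ := (−1−κ)^{−1/2}·h. Then (φ, φ₂, φ₃) is an almost bi-paracontact structure: φ₂∘φ₂ = id_V − η⊗ξ, φ∘φ₂ = −φ₂∘φ = φ₃, φ₃∘φ₃ = −id_V + η⊗ξ, and φ₃(ξ) = 0. -/

import Mathlib

theorem stmt_1
    {V : Type*} [AddCommGroup V] [Module ℝ V]
    (ξ : V) (η : V →ₗ[ℝ] ℝ) (φ h : V →ₗ[ℝ] V) (κ : ℝ)
    (hηξ : η ξ = 1)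
    (hφ2 : ∀ v, φ (φ v) = v - η v • ξ)
    (hφξ : φ ξ = 0)
    (hηφ : ∀ v, η (φ v) = 0)
    (hhξ : h ξ = 0)
    (hηh : ∀ v, η (h v) = 0)
    (hhφ : ∀ v, h (φ v) = - φ (h v))
    (hh2 : ∀ v, h (h v) = (1 + κ) • φ (φ v))
    (hκ : κ < -1)
    (φ₂ φ₃ : V →ₗ[ℝ] V)
    (hφ₂ : φ₂ = (Real.sqrt (-1 - κ))⁻¹ • (φ ∘ₗ h))
    (hφ₃ : φ₃ = (Real.sqrt (-1 - κ))⁻¹ • h) :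
    (∀ v, φ₂ (φ₂ v) = v - η v • ξ) ∧
    (∀ v, φ (φ₂ v) = φ₃ v) ∧
    (∀ v, φ₂ (φ v) = - φ₃ v) ∧
    (∀ v, φ₃ (φ₃ v) = - v + η v • ξ) ∧
    φ₃ ξ = 0 := by
  have hpos : (0:ℝ) < -1 - κ := by linarith
  set c : ℝ := (Real.sqrt (-1 - κ))⁻¹ with hc
  have hc2 : c * c * (1 + κ) = -1 := by
    have hs : Real.sqrt (-1 - κ) * Real.sqrt (-1 - κ) = -1 - κ :=
      Real.mul_self_sqrt hpos.le
    have hne : Real.sqrt (-1 - κ) ≠ 0 := by positivity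
    field_simp [hc]
    rw [hc, inv_pow, Real.sq_sqrt hpos.le, inv_mul_eq_iff_eq_mul₀ hpos.ne']; ring
  subst hφ₂ hφ₃
  refine ⟨?_, ?_, ?_, ?_, ?_⟩
  · intro v
    simp only [LinearMap.smul_apply, LinearMap.coe_comp, Function.comp_apply, map_smul]
    rw [hhφ, hh2]
    simp only [map_neg, map_smul, hφ2, hηφ, map_sub, hηξ, smul_eq_mul, mul_one,
      sub_self, zero_smul, sub_zero, smul_neg, smul_smul]
    rw [← mul_assoc, hc2]
    module
  · intro v
    simp only [LinearMap.smul_apply, LinearMap.coe_comp, Function.comp_apply, map_smul]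
    rw [hφ2, hηh]
    simp
  · intro v
    simp only [LinearMap.smul_apply, LinearMap.coe_comp, Function.comp_apply, map_smul]
    rw [hhφ, map_neg, hφ2, hηh]
    simp
  · intro v
    simp only [LinearMap.smul_apply, map_smul]
    rw [hh2, hφ2, smul_smul, smul_smul, hc2]
    module
  · simp [LinearMap.smul_apply, hhξ]
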